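/- (Sufficiency under injectivity of the extended adjoint) Assume: (a) there exists C > 0 with ‖A1* h4‖ ≤ C ‖B1* h4‖ for all h4 ∈ H4; (b) the map (h4, h5) ↦ B1* h4 + B2* h5 from H4 × H5 to H2 is injective (i.e. B1* h4 + B2* h5 = 0 implies h4 = 0 and h5 = 0); and (c) for every h5 ∈ H5, if B2* h5 lies in the closure of range(B1*) then h5 = 0 (equivalently: if there is a sequence (y_n) in H4 with B1* y_n → B2* h5 in H2, then h5 = 0). Then for every h1 ∈ H1 and every ε > 0 there exists h2 ∈ H2 such that A1 h1 = B1 h2 and ‖A2 h1 − B2 h2‖ ≤ ε. -/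

import Mathlib

open ContinuousLinearMap RealInnerProductSpace

/-- Range criterion: if `|⟪y, h4⟫| ≤ c * ‖B1† h4‖` for all `h4`, then `y ∈ range B1`. -/
lemma my_mem_range_of_inner_bound
    {H2 H4 : Type*}
    [NormedAddCommGroup H2] [InnerProductSpace ℝ H2] [CompleteSpace H2]
    [NormedAddCommGroup H4] [InnerProductSpace ℝ H4] [CompleteSpace H4]
    (B1 : H2 →L[ℝ] H4) (y : H4) (c : ℝ)
    (h : ∀ h4 : H4, ‖⟪y, h4⟫‖ ≤ c * ‖adjoint B1 h4‖) :
    ∃ z : H2, B1 z = y := by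
  set T : H4 →ₗ[ℝ] H2 := (adjoint B1 : H4 →L[ℝ] H2).toLinearMap with hT
  set g : H4 →ₗ[ℝ] ℝ := (innerSL ℝ y : H4 →L[ℝ] ℝ).toLinearMap with hg
  have hker : LinearMap.ker T ≤ LinearMap.ker g := by
    intro x hx
    have hx0 : T x = 0 := hx
    have := h x
    rw [show adjoint B1 x = T x from rfl, hx0] at this
    simp only [norm_zero, mul_zero] at this
    have h0 : ⟪y, x⟫ = 0 := norm_le_zero_iff.mp this
    simpa [hg] using h0
  set f₀ : (H4 ⧸ LinearMap.ker T) →ₗ[ℝ] ℝ := (LinearMap.ker T).liftQ g hker with hf₀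
  set f : LinearMap.range T →ₗ[ℝ] ℝ := f₀ ∘ₗ T.quotKerEquivRange.symm.toLinearMap with hf
  have hfval : ∀ (x : H4) (hx : T x ∈ LinearMap.range T), f ⟨T x, hx⟩ = ⟪y, x⟫ := by
    intro x hx
    simp only [hf, LinearMap.comp_apply, LinearEquiv.coe_toLinearMap,
      T.quotKerEquivRange_symm_apply_image x hx]
    simp [hf₀, hg]
  have hfb : ∀ s : LinearMap.range T, ‖f s‖ ≤ c * ‖s‖ := by
    rintro ⟨s, hs⟩
    obtain ⟨x, rfl⟩ := hs
    rw [hfval x ⟨x, rfl⟩]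
    simpa [hT] using h x
  set fC : (LinearMap.range T : Submodule ℝ H2) →L[ℝ] ℝ := f.mkContinuous c hfb with hfC
  obtain ⟨G, hGext, -⟩ := exists_extension_norm_eq (LinearMap.range T) fC
  set z : H2 := (InnerProductSpace.toDual ℝ H2).symm G with hz
  refine ⟨z, ?_⟩
  refine ext_inner_right ℝ fun v => ?_
  have h1 : ⟪B1 z, v⟫ = ⟪z, T v⟫ := by
    rw [real_inner_comm, ← ContinuousLinearMap.adjoint_inner_left, real_inner_comm]
    rfl
  have h2 : ⟪z, T v⟫ = G (T v) := by
    simp [hz, InnerProductSpace.toDual_symm_apply]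
  have h3 : G (T v) = fC ⟨T v, ⟨v, rfl⟩⟩ := hGext ⟨T v, ⟨v, rfl⟩⟩
  have h4 : fC ⟨T v, ⟨v, rfl⟩⟩ = ⟪y, v⟫ := hfval v ⟨v, rfl⟩
  rw [h1, h2, h3, h4]

/-- Sufficiency under injectivity of the (extended) adjoint `B*`. -/
theorem sufficiency_under_injectivity
    {H1 H2 H4 H5 : Type*}
    [NormedAddCommGroup H1] [InnerProductSpace ℝ H1] [CompleteSpace H1]
    [NormedAddCommGroup H2] [InnerProductSpace ℝ H2] [CompleteSpace H2]
    [NormedAddCommGroup H4] [InnerProductSpace ℝ H4] [CompleteSpace H4]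
    [NormedAddCommGroup H5] [InnerProductSpace ℝ H5] [CompleteSpace H5]
    (A1 : H1 →L[ℝ] H4) (A2 : H1 →L[ℝ] H5)
    (B1 : H2 →L[ℝ] H4) (B2 : H2 →L[ℝ] H5)
    (ha : ∃ C : ℝ, 0 < C ∧ ∀ h4 : H4, ‖adjoint A1 h4‖ ≤ C * ‖adjoint B1 h4‖)
    (hb : ∀ (h4 : H4) (h5 : H5), adjoint B1 h4 + adjoint B2 h5 = 0 →
      h4 = 0 ∧ h5 = 0)
    (hc : ∀ h5 : H5, adjoint B2 h5 ∈ closure (Set.range (adjoint B1)) → h5 = 0) :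
    ∀ h1 : H1, ∀ ε : ℝ, 0 < ε →
      ∃ h2 : H2, A1 h1 = B1 h2 ∧ ‖A2 h1 - B2 h2‖ ≤ ε := by
  obtain ⟨C, hC, hCb⟩ := ha
  intro h1 ε hε
  -- Step 1: `A1 h1 ∈ range B1` via the range criterion.
  have hbound : ∀ h4 : H4, ‖⟪A1 h1, h4⟫‖ ≤ (C * ‖h1‖) * ‖adjoint B1 h4‖ := by
    intro h4
    have e1 : ⟪A1 h1, h4⟫ = ⟪adjoint A1 h4, h1⟫ := by
      rw [ContinuousLinearMap.adjoint_inner_left, real_inner_comm]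
    rw [e1]
    calc ‖⟪adjoint A1 h4, h1⟫‖ ≤ ‖adjoint A1 h4‖ * ‖h1‖ := norm_inner_le_norm _ _
      _ ≤ (C * ‖adjoint B1 h4‖) * ‖h1‖ := by
          apply mul_le_mul_of_nonneg_right (hCb h4) (norm_nonneg _)
      _ = (C * ‖h1‖) * ‖adjoint B1 h4‖ := by ring
  obtain ⟨z0, hz0⟩ := my_mem_range_of_inner_bound B1 (A1 h1) (C * ‖h1‖) hbound
  -- Step 2: density of `B2 (ker B1)` in `H5`.
  set D : Submodule ℝ H5 := (LinearMap.ker (B1 : H2 →ₗ[ℝ] H4)).map (B2 : H2 →ₗ[ℝ] H5) with hDdef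
  have hD : D.topologicalClosure = ⊤ := by
    rw [Submodule.topologicalClosure_eq_top_iff, Submodule.eq_bot_iff]
    intro h5 hh5
    apply hc
    have key : adjoint B2 h5 ∈ (LinearMap.ker (B1 : H2 →ₗ[ℝ] H4) : Submodule ℝ H2)ᗮ := by
      rw [Submodule.mem_orthogonal]
      intro k hk
      have h0 : ⟪B2 k, h5⟫ = 0 := hh5 (B2 k) ⟨k, hk, rfl⟩
      rw [real_inner_comm, ContinuousLinearMap.adjoint_inner_left, real_inner_comm]
      exact h0
    have hker_eq : (LinearMap.ker (B1 : H2 →ₗ[ℝ] H4) : Submodule ℝ H2)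
        = (LinearMap.range ((adjoint B1 : H4 →L[ℝ] H2) : H4 →ₗ[ℝ] H2))ᗮ := by
      ext x
      rw [LinearMap.mem_ker, ContinuousLinearMap.coe_coe, Submodule.mem_orthogonal]
      constructor
      · rintro hx u ⟨w, rfl⟩
        rw [real_inner_comm, ContinuousLinearMap.coe_coe, ContinuousLinearMap.adjoint_inner_right, hx,
          inner_zero_left]
      · intro hx
        apply ext_inner_right ℝ
        intro w
        have h := hx (adjoint B1 w) ⟨w, rfl⟩
        rw [real_inner_comm, ContinuousLinearMap.adjoint_inner_right] at h
        rw [h, inner_zero_left]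
    rw [hker_eq, Submodule.orthogonal_orthogonal_eq_closure] at key
    have : adjoint B2 h5 ∈ closure
        ((LinearMap.range ((adjoint B1 : H4 →L[ℝ] H2) : H4 →ₗ[ℝ] H2) : Submodule ℝ H2) : Set H2) := by
      rw [← Submodule.topologicalClosure_coe]
      exact key
    simpa [LinearMap.coe_range] using this
  -- Step 3: approximate `A2 h1 - B2 z0` by an element of `B2 (ker B1)`.
  set t : H5 := A2 h1 - B2 z0 with ht
  have htm : t ∈ closure (D : Set H5) := by
    rw [← Submodule.topologicalClosure_coe, hD]
    trivial
  rw [Metric.mem_closure_iff] at htm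
  obtain ⟨b, hbD, hbd⟩ := htm ε hε
  obtain ⟨k, hk, rfl⟩ := hbD
  refine ⟨z0 + k, ?_, ?_⟩
  · rw [map_add, hz0, (show B1 k = 0 from LinearMap.mem_ker.mp hk), add_zero]
  · have : A2 h1 - B2 (z0 + k) = t - B2 k := by
      rw [ht, map_add]; abel
    rw [this, ← dist_eq_norm]
    exact le_of_lt hbd
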